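/- Let μ and ν be Borel probability measures on ℝ² with all absolute moments finite (∫ ‖b‖^n dμ < ∞ and ∫ ‖b‖^n dν < ∞ for every n ∈ ℕ). Assume μ is determined by its moments, in the sense that any Borel probability measure on ℝ² having the same mixed moments ∫ b₀^j b₁^k as μ for all j, k ∈ ℕ equals μ. If φ_μ(t, t w) = φ_ν(t, t w) for all t ∈ ℝ and all w ∈ [0, 1], then μ = ν. -/

import Mathlib

open MeasureTheory Complex

noncomputable def Yc (w : ℝ) (b : ℝ × ℝ) : ℂ := (b.1 : ℂ) + (w : ℂ) * b.2

lemma Yc_eq (w : ℝ) (b : ℝ × ℝ) : Yc w b = ((b.1 + w * b.2 : ℝ) : ℂ) := by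
  simp [Yc]

lemma Yc_norm_le (w : ℝ) (b : ℝ × ℝ) : ‖Yc w b‖ ≤ (1 + |w|) * ‖b‖ := by
  rw [Yc_eq, Complex.norm_real, Real.norm_eq_abs]
  calc |b.1 + w * b.2| ≤ |b.1| + |w| * |b.2| := by
        refine (abs_add_le _ _).trans ?_; rw [abs_mul]
      _ ≤ 1 * ‖b‖ + |w| * ‖b‖ := by
        gcongr
        · rw [one_mul, ← Real.norm_eq_abs]; exact norm_fst_le b
        · rw [← Real.norm_eq_abs]; exact norm_snd_le b
      _ = (1 + |w|) * ‖b‖ := by ring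

lemma norm_integrand (w t : ℝ) (k : ℕ) (b : ℝ × ℝ) :
    ‖(Complex.I * Yc w b) ^ k * Complex.exp (Complex.I * t * Yc w b)‖
      = ‖Yc w b‖ ^ k := by
  rw [norm_mul, norm_pow, norm_mul, Complex.norm_I, one_mul]
  have : Complex.I * t * Yc w b = ((t * (b.1 + w * b.2) : ℝ) : ℂ) * Complex.I := by
    rw [Yc_eq]; push_cast; ring
  rw [this, Complex.norm_exp_ofReal_mul_I, mul_one]

lemma integrable_main (ρ : Measure (ℝ × ℝ)) [IsProbabilityMeasure ρ]
    (hm : ∀ n : ℕ, Integrable (fun b : ℝ × ℝ => ‖b‖ ^ n) ρ) (w t : ℝ) (k : ℕ) :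
    Integrable (fun b => (Complex.I * Yc w b) ^ k * Complex.exp (Complex.I * t * Yc w b)) ρ := by
  have hc : Continuous (fun b : ℝ × ℝ => (Complex.I * Yc w b) ^ k
      * Complex.exp (Complex.I * t * Yc w b)) := by
    unfold Yc; fun_prop
  refine Integrable.mono ((hm k).const_mul ((1 + |w|) ^ k)) hc.aestronglyMeasurable ?_
  filter_upwards with b
  rw [norm_integrand]
  have h1 : ‖Yc w b‖ ^ k ≤ ((1 + |w|) * ‖b‖) ^ k :=
    pow_le_pow_left₀ (norm_nonneg _) (Yc_norm_le w b) k
  rw [mul_pow] at h1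
  rw [Real.norm_eq_abs]
  exact h1.trans (le_abs_self _)

lemma hasDerivAt_main (ρ : Measure (ℝ × ℝ)) [IsProbabilityMeasure ρ]
    (hm : ∀ n : ℕ, Integrable (fun b : ℝ × ℝ => ‖b‖ ^ n) ρ) (w : ℝ) (k : ℕ) (t : ℝ) :
    HasDerivAt (fun t : ℝ => ∫ b, (Complex.I * Yc w b) ^ k
        * Complex.exp (Complex.I * t * Yc w b) ∂ρ)
      (∫ b, (Complex.I * Yc w b) ^ (k + 1) * Complex.exp (Complex.I * t * Yc w b) ∂ρ) t := by
  have := hasDerivAt_integral_of_dominated_loc_of_deriv_le (𝕜 := ℝ) (μ := ρ) (x₀ := t)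
    (F := fun t b => (Complex.I * Yc w b) ^ k * Complex.exp (Complex.I * t * Yc w b))
    (F' := fun t b => (Complex.I * Yc w b) ^ (k + 1) * Complex.exp (Complex.I * t * Yc w b))
    (bound := fun b => (1 + |w|) ^ (k + 1) * ‖b‖ ^ (k + 1)) (s := Metric.ball t 1) (Metric.ball_mem_nhds t one_pos)
    ?_ ?_ ?_ ?_ ?_ ?_
  · exact this.2
  · filter_upwards with x
    exact (integrable_main ρ hm w x k).aestronglyMeasurable
  · exact integrable_main ρ hm w t k
  · exact (integrable_main ρ hm w t (k + 1)).aestronglyMeasurable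
  · filter_upwards with b x hx
    rw [norm_integrand]
    have h1 : ‖Yc w b‖ ^ (k+1) ≤ ((1 + |w|) * ‖b‖) ^ (k+1) :=
      pow_le_pow_left₀ (norm_nonneg _) (Yc_norm_le w b) (k+1)
    rw [mul_pow] at h1; exact h1
  · exact (hm (k + 1)).const_mul _
  · filter_upwards with b x hx
    have h1 : HasDerivAt (fun x : ℝ => Complex.exp (Complex.I * x * Yc w b))
        (Complex.I * Yc w b * Complex.exp (Complex.I * x * Yc w b)) x := by
      have h2 : HasDerivAt (fun x : ℝ => (Complex.I * x * Yc w b))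
          (Complex.I * Yc w b) x := by
        have h3 : HasDerivAt (fun x : ℝ => (x : ℂ)) 1 x := Complex.ofRealCLM.hasDerivAt
        have h4 := (h3.const_mul Complex.I).mul_const (Yc w b)
        simpa using h4
      simpa [mul_comm] using h2.cexp
    have := h1.const_mul ((Complex.I * Yc w b) ^ k)
    convert this using 1
    case e'_4 => rfl
    ring

lemma integrable_mixed (ρ : Measure (ℝ × ℝ)) [IsProbabilityMeasure ρ]
    (hm : ∀ n : ℕ, Integrable (fun b : ℝ × ℝ => ‖b‖ ^ n) ρ) (j k : ℕ) :
    Integrable (fun b : ℝ × ℝ => b.2 ^ k * b.1 ^ j) ρ := by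
  have hc : Continuous (fun b : ℝ × ℝ => b.2 ^ k * b.1 ^ j) := by continuity
  refine Integrable.mono (hm (j + k)) hc.aestronglyMeasurable ?_
  filter_upwards with b
  rw [Real.norm_eq_abs, Real.norm_eq_abs, abs_mul, _root_.abs_pow, _root_.abs_pow,
    _root_.abs_of_nonneg (pow_nonneg (norm_nonneg _) _)]
  have h2 : |b.2| ≤ ‖b‖ := by rw [← Real.norm_eq_abs]; exact norm_snd_le b
  have h1 : |b.1| ≤ ‖b‖ := by rw [← Real.norm_eq_abs]; exact norm_fst_le b
  calc |b.2| ^ k * |b.1| ^ j ≤ ‖b‖ ^ k * ‖b‖ ^ j :=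
        mul_le_mul (pow_le_pow_left₀ (abs_nonneg _) h2 k)
          (pow_le_pow_left₀ (abs_nonneg _) h1 j)
          (pow_nonneg (abs_nonneg _) j) (pow_nonneg (norm_nonneg _) k)
      _ = ‖b‖ ^ (j + k) := by rw [← pow_add]; ring_nf

lemma expand_pow (ρ : Measure (ℝ × ℝ)) [IsProbabilityMeasure ρ]
    (hm : ∀ n : ℕ, Integrable (fun b : ℝ × ℝ => ‖b‖ ^ n) ρ) (w : ℝ) (n : ℕ) :
    ∫ b : ℝ × ℝ, (b.1 + w * b.2) ^ n ∂ρ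
      = ∑ k ∈ Finset.range (n + 1),
          (w ^ k * (n.choose k : ℝ)) * ∫ b : ℝ × ℝ, b.2 ^ k * b.1 ^ (n - k) ∂ρ := by
  have e : ∀ b : ℝ × ℝ, (b.1 + w * b.2) ^ n
      = ∑ k ∈ Finset.range (n + 1), (w ^ k * (n.choose k : ℝ)) * (b.2 ^ k * b.1 ^ (n - k)) := by
    intro b
    rw [add_comm, add_pow]
    refine Finset.sum_congr rfl fun k _ => ?_
    ring
  calc ∫ b : ℝ × ℝ, (b.1 + w * b.2) ^ n ∂ρ
      = ∫ b : ℝ × ℝ, ∑ k ∈ Finset.range (n + 1),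
          (w ^ k * (n.choose k : ℝ)) * (b.2 ^ k * b.1 ^ (n - k)) ∂ρ := by
        exact integral_congr_ae (Filter.Eventually.of_forall fun b => e b)
    _ = ∑ k ∈ Finset.range (n + 1),
          ∫ b : ℝ × ℝ, (w ^ k * (n.choose k : ℝ)) * (b.2 ^ k * b.1 ^ (n - k)) ∂ρ := by
        refine integral_finset_sum _ fun k _ => ?_
        exact (integrable_mixed ρ hm (n - k) k).const_mul _
    _ = ∑ k ∈ Finset.range (n + 1),
          (w ^ k * (n.choose k : ℝ)) * ∫ b : ℝ × ℝ, b.2 ^ k * b.1 ^ (n - k) ∂ρ := by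
        refine Finset.sum_congr rfl fun k _ => ?_
        exact integral_const_mul _ _

/-- Identification under moment determinacy: if `μ` has all absolute moments finite and is
determined by its moments, and `φ_μ(t, tw) = φ_ν(t, tw)` for all `t ∈ ℝ`, `w ∈ [0,1]`,
then `μ = ν`. -/
theorem stmt_12 (μ ν : Measure (ℝ × ℝ)) [IsProbabilityMeasure μ] [IsProbabilityMeasure ν]
    (hμm : ∀ n : ℕ, Integrable (fun b : ℝ × ℝ => ‖b‖ ^ n) μ)
    (hνm : ∀ n : ℕ, Integrable (fun b : ℝ × ℝ => ‖b‖ ^ n) ν)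
    (hdet : ∀ ρ : Measure (ℝ × ℝ), IsProbabilityMeasure ρ →
      (∀ n : ℕ, Integrable (fun b : ℝ × ℝ => ‖b‖ ^ n) ρ) →
      (∀ j k : ℕ, ∫ b : ℝ × ℝ, b.1 ^ j * b.2 ^ k ∂ρ = ∫ b : ℝ × ℝ, b.1 ^ j * b.2 ^ k ∂μ) →
      ρ = μ)
    (h : ∀ t : ℝ, ∀ w ∈ Set.Icc (0 : ℝ) 1,
      ∫ b : ℝ × ℝ, Complex.exp (Complex.I * ((t * b.1 + (t * w) * b.2 : ℝ) : ℂ)) ∂μ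
        = ∫ b : ℝ × ℝ, Complex.exp (Complex.I * ((t * b.1 + (t * w) * b.2 : ℝ) : ℂ)) ∂ν) :
    μ = ν := by
  -- Step 1: all "derivative" integrals agree
  have key : ∀ w ∈ Set.Icc (0 : ℝ) 1, ∀ k : ℕ, ∀ t : ℝ,
      ∫ b, (Complex.I * Yc w b) ^ k * Complex.exp (Complex.I * t * Yc w b) ∂μ
        = ∫ b, (Complex.I * Yc w b) ^ k * Complex.exp (Complex.I * t * Yc w b) ∂ν := by
    intro w hw k
    induction k with
    | zero =>
      intro t
      have e : ∀ b : ℝ × ℝ, (Complex.I * Yc w b) ^ 0 * Complex.exp (Complex.I * t * Yc w b)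
          = Complex.exp (Complex.I * ((t * b.1 + (t * w) * b.2 : ℝ) : ℂ)) := by
        intro b
        rw [pow_zero, one_mul, Yc_eq]
        congr 1
        push_cast
        ring
      calc ∫ b, (Complex.I * Yc w b) ^ 0 * Complex.exp (Complex.I * t * Yc w b) ∂μ
          = ∫ b : ℝ × ℝ, Complex.exp (Complex.I * ((t * b.1 + (t * w) * b.2 : ℝ) : ℂ)) ∂μ :=
            integral_congr_ae (Filter.Eventually.of_forall e)
        _ = ∫ b : ℝ × ℝ, Complex.exp (Complex.I * ((t * b.1 + (t * w) * b.2 : ℝ) : ℂ)) ∂ν :=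
            h t w hw
        _ = ∫ b, (Complex.I * Yc w b) ^ 0 * Complex.exp (Complex.I * t * Yc w b) ∂ν :=
            (integral_congr_ae (Filter.Eventually.of_forall e)).symm
    | succ k ih =>
      intro t
      have h1 := hasDerivAt_main μ hμm w k t
      have h2 := hasDerivAt_main ν hνm w k t
      rw [funext ih] at h1
      exact h1.unique h2
  -- Step 2: moments of b.1 + w * b.2 agree
  have mom : ∀ w ∈ Set.Icc (0 : ℝ) 1, ∀ n : ℕ,
      ∫ b : ℝ × ℝ, (b.1 + w * b.2) ^ n ∂μ = ∫ b : ℝ × ℝ, (b.1 + w * b.2) ^ n ∂ν := by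
    intro w hw n
    have hk := key w hw n 0
    have e : ∀ (ρ : Measure (ℝ × ℝ)),
        ∫ b, (Complex.I * Yc w b) ^ n * Complex.exp (Complex.I * (0 : ℝ) * Yc w b) ∂ρ
          = Complex.I ^ n * ((∫ b : ℝ × ℝ, (b.1 + w * b.2) ^ n ∂ρ : ℝ) : ℂ) := by
      intro ρ
      calc ∫ b, (Complex.I * Yc w b) ^ n * Complex.exp (Complex.I * (0 : ℝ) * Yc w b) ∂ρ
          = ∫ b : ℝ × ℝ, Complex.I ^ n * ((((b.1 + w * b.2) ^ n : ℝ)) : ℂ) ∂ρ := by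
            refine integral_congr_ae (Filter.Eventually.of_forall fun b => ?_)
            show (Complex.I * Yc w b) ^ n * Complex.exp (Complex.I * ((0 : ℝ) : ℂ) * Yc w b)
              = Complex.I ^ n * ((((b.1 + w * b.2) ^ n : ℝ)) : ℂ)
            rw [Yc_eq]
            push_cast
            simp [mul_pow]
        _ = Complex.I ^ n * ∫ b : ℝ × ℝ, ((((b.1 + w * b.2) ^ n : ℝ)) : ℂ) ∂ρ :=
            integral_const_mul _ _
        _ = Complex.I ^ n * ((∫ b : ℝ × ℝ, (b.1 + w * b.2) ^ n ∂ρ : ℝ) : ℂ) := by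
            congr 1
            exact integral_ofReal
    rw [e μ, e ν] at hk
    have := mul_left_cancel₀ (pow_ne_zero n Complex.I_ne_zero) hk
    exact_mod_cast this
  -- Step 3: mixed moments agree, via polynomial identity in w
  have mixed : ∀ j k : ℕ, ∫ b : ℝ × ℝ, b.1 ^ j * b.2 ^ k ∂ν = ∫ b : ℝ × ℝ, b.1 ^ j * b.2 ^ k ∂μ := by
    have mm : ∀ n k : ℕ, k ≤ n →
        ∫ b : ℝ × ℝ, b.2 ^ k * b.1 ^ (n - k) ∂ν = ∫ b : ℝ × ℝ, b.2 ^ k * b.1 ^ (n - k) ∂μ := by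
      intro n k hkn
      set P : Polynomial ℝ := ∑ j ∈ Finset.range (n + 1),
        Polynomial.C ((n.choose j : ℝ) * ((∫ b : ℝ × ℝ, b.2 ^ j * b.1 ^ (n - j) ∂μ)
          - ∫ b : ℝ × ℝ, b.2 ^ j * b.1 ^ (n - j) ∂ν)) * Polynomial.X ^ j with hP
      have heval : ∀ w ∈ Set.Icc (0 : ℝ) 1, P.eval w = 0 := by
        intro w hw
        have h1 := expand_pow μ hμm w n
        have h2 := expand_pow ν hνm w n
        have h3 := mom w hw n
        rw [h1, h2] at h3
        have : P.eval w = (∑ j ∈ Finset.range (n + 1),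
            (w ^ j * (n.choose j : ℝ)) * ∫ b : ℝ × ℝ, b.2 ^ j * b.1 ^ (n - j) ∂μ)
          - ∑ j ∈ Finset.range (n + 1),
            (w ^ j * (n.choose j : ℝ)) * ∫ b : ℝ × ℝ, b.2 ^ j * b.1 ^ (n - j) ∂ν := by
          rw [hP, Polynomial.eval_finset_sum, ← Finset.sum_sub_distrib]
          refine Finset.sum_congr rfl fun j _ => ?_
          simp only [Polynomial.eval_mul, Polynomial.eval_C, Polynomial.eval_pow,
            Polynomial.eval_X]
          ring
        rw [this, h3, sub_self]
      have hP0 : P = 0 := by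
        refine Polynomial.eq_zero_of_infinite_isRoot P ?_
        refine Set.Infinite.mono ?_ (Set.Icc_infinite (by norm_num : (0:ℝ) < 1))
        intro w hw
        exact heval w hw
      have hcoeff : P.coeff k = (n.choose k : ℝ) * ((∫ b : ℝ × ℝ, b.2 ^ k * b.1 ^ (n - k) ∂μ)
          - ∫ b : ℝ × ℝ, b.2 ^ k * b.1 ^ (n - k) ∂ν) := by
        rw [hP, Polynomial.finset_sum_coeff]
        rw [Finset.sum_eq_single k]
        · rw [Polynomial.coeff_C_mul, Polynomial.coeff_X_pow, if_pos rfl, mul_one]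
        · intro j _ hj
          rw [Polynomial.coeff_C_mul, Polynomial.coeff_X_pow, if_neg (fun hc => hj hc.symm),
            mul_zero]
        · intro hk
          exact absurd (Finset.mem_range.mpr (Nat.lt_succ_of_le hkn)) hk
      rw [hP0, Polynomial.coeff_zero] at hcoeff
      have hch : ((n.choose k : ℝ)) ≠ 0 := Nat.cast_ne_zero.mpr (Nat.choose_pos hkn).ne'
      have := (mul_eq_zero.mp hcoeff.symm).resolve_left hch
      linarith [sub_eq_zero.mp this]
    intro j k
    have := mm (j + k) k (Nat.le_add_left k j)
    have hjk : j + k - k = j := by omega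
    rw [hjk] at this
    calc ∫ b : ℝ × ℝ, b.1 ^ j * b.2 ^ k ∂ν = ∫ b : ℝ × ℝ, b.2 ^ k * b.1 ^ j ∂ν :=
          integral_congr_ae (Filter.Eventually.of_forall fun b => mul_comm _ _)
      _ = ∫ b : ℝ × ℝ, b.2 ^ k * b.1 ^ j ∂μ := this
      _ = ∫ b : ℝ × ℝ, b.1 ^ j * b.2 ^ k ∂μ :=
          integral_congr_ae (Filter.Eventually.of_forall fun b => mul_comm _ _)
  exact (hdet ν inferInstance hνm mixed).symm
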